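/- Let L be a nondegenerate integral lattice and r ∈ L a primitive vector with (r,r) ≠ 0. If the reflection σ_r(l) = l - (2(l,r)/(r,r))·r maps L to itself (i.e. σ_r ∈ O(L)), then div(r) divides r² and r² divides 2·div(r), where div(r)ℤ = (r,L). -/

import Mathlib

open Matrix

/-- If `r` is a primitive vector of a nondegenerate lattice with `(r,r) ≠ 0`
and the reflection `σ_r` maps the lattice to itself, then `div(r) ∣ r²` and `r² ∣ 2·div(r)`. -/
theorem stmt_1 (n : ℕ) (B : Matrix (Fin n) (Fin n) ℤ)
    (hsymm : B.IsSymm) (hnd : B.det ≠ 0)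
    (r : Fin n → ℤ)
    (hprim : ∀ (k : ℤ) (v : Fin n → ℤ), r = k • v → IsUnit k)
    (hr : r ⬝ᵥ B.mulVec r ≠ 0)
    (divr : ℤ) (hdivpos : 0 < divr)
    (hdiv : ∀ m : ℤ, (∃ v : Fin n → ℤ, r ⬝ᵥ B.mulVec v = m) ↔ divr ∣ m)
    (hrefl : ∀ l : Fin n → ℤ, ∃ l' : Fin n → ℤ, ∀ i : Fin n,
      (l' i : ℚ) = (l i : ℚ) -
        (2 * ((l ⬝ᵥ B.mulVec r : ℤ) : ℚ) / ((r ⬝ᵥ B.mulVec r : ℤ) : ℚ)) * (r i : ℚ)) :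
    divr ∣ (r ⬝ᵥ B.mulVec r) ∧ (r ⬝ᵥ B.mulVec r) ∣ 2 * divr := by
  set N : ℤ := r ⬝ᵥ B.mulVec r with hN
  -- (a) div(r) ∣ r²
  have h1 : divr ∣ N := (hdiv N).mp ⟨r, rfl⟩
  refine ⟨h1, ?_⟩
  -- symmetry of the form
  have hsym2 : ∀ w : Fin n → ℤ, w ⬝ᵥ B.mulVec r = r ⬝ᵥ B.mulVec w := by
    intro w
    nth_rewrite 1 [← hsymm]
    rw [dotProduct_mulVec, vecMul_transpose, dotProduct_comm]
  -- pick v with (r, v) = div(r)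
  obtain ⟨v, hv⟩ := (hdiv divr).mpr dvd_rfl
  obtain ⟨l', hl'⟩ := hrefl v
  have hvr : v ⬝ᵥ B.mulVec r = divr := by rw [hsym2 v, hv]
  have hNQ : (N : ℚ) ≠ 0 := Int.cast_ne_zero.mpr hr
  -- integrality: N * (v i - l' i) = 2 * divr * r i
  have hk : ∀ i, N * (v i - l' i) = 2 * divr * r i := by
    intro i
    have h := hl' i
    rw [hvr] at h
    have hq : (N : ℚ) * ((v i : ℚ) - (l' i : ℚ)) = 2 * (divr : ℚ) * (r i : ℚ) := by
      field_simp at h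
      linarith
    exact_mod_cast hq
  set a : ℤ := 2 * divr with ha
  set g : ℤ := (Int.gcd N a : ℤ) with hg
  have hgpos : 0 < Int.gcd N a := Int.gcd_pos_of_ne_zero_left a hr
  have hgne : g ≠ 0 := by positivity
  have hgN : g ∣ N := Int.gcd_dvd_left N a
  have hgA : g ∣ a := Int.gcd_dvd_right N a
  have hcop : Int.gcd (N / g) (a / g) = 1 := Int.gcd_div_gcd_div_gcd hgpos
  -- N/g divides each r i
  have hdvd : ∀ i, N / g ∣ r i := by
    intro i
    have h2 : (N / g) * (v i - l' i) = (a / g) * r i := by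
      have := hk i
      have hNg : N = g * (N / g) := (Int.mul_ediv_cancel' hgN).symm
      have hAg : a = g * (a / g) := (Int.mul_ediv_cancel' hgA).symm
      apply mul_left_cancel₀ hgne
      rw [← mul_assoc, ← mul_assoc, ← hNg, ← hAg]
      exact hk i
    have : N / g ∣ r i * (a / g) := ⟨v i - l' i, by linarith [h2]⟩
    exact Int.dvd_of_dvd_mul_left_of_gcd_one this hcop
  -- primitivity forces N/g to be a unit
  have hunit : IsUnit (N / g) := by
    refine hprim (N / g) (fun i => r i / (N / g)) ?_
    funext i
    simp [Int.mul_ediv_cancel' (hdvd i)]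
  have hNg : N = g * (N / g) := (Int.mul_ediv_cancel' hgN).symm
  rcases Int.isUnit_iff.mp hunit with h | h
  · rw [hNg, h, mul_one]; exact hgA
  · rw [hNg, h, mul_neg_one]; exact neg_dvd.mpr hgA
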